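/- Verification of the stationary axisymmetric kernel solutions: For every c = (c₁,…,c₈) ∈ ℂ⁸, the function Φ_Ker(c) satisfies ∂_r⁴ Φ_Ker(c) = 0 and 𝒯₋₂ Φ_Ker(c) = 0 at every point of U = {(r,z) : r > r₊, −1 < z < 1}. -/

import Mathlib

noncomputable section

open ComplexConjugate Filter

namespace Kerr

/-- A point of the Boyer-Lindquist-type coordinate chart `(t, r, z, φ)`. -/
abbrev Pt := Fin 4 → ℝ

/-- Partial derivative of a real-valued function on the chart. -/
def pd (i : Fin 4) (f : Pt → ℝ) (p : Pt) : ℝ :=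
  fderiv ℝ f p (Pi.single i 1)

/-- Partial derivative of a complex-valued function on the chart. -/
def pdC (i : Fin 4) (f : Pt → ℂ) (p : Pt) : ℂ :=
  fderiv ℝ f p (Pi.single i 1)

/-- `Δ := r(r−2M)+a²` for the Kerr black hole with `M = 1`. -/
def Del (a r : ℝ) : ℝ := r * (r - 2) + a ^ 2

/-- `Σ := r² + a²z²`. -/
def Sig (a r z : ℝ) : ℝ := r ^ 2 + a ^ 2 * z ^ 2

/-- Outer horizon radius `r₊ = 1 + √(1−a²)` (with `M = 1`). -/
def rplus (a : ℝ) : ℝ := 1 + Real.sqrt (1 - a ^ 2)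

/-- Inner horizon radius `r₋ = 1 − √(1−a²)` (with `M = 1`). -/
def rminus (a : ℝ) : ℝ := 1 - Real.sqrt (1 - a ^ 2)

/-- The Kerr family of metrics, parametrized by mass `M` and angular momentum `J` (`a = J/M`),
in Boyer-Lindquist-type coordinates `(t,r,z,φ)`. -/
def gFam (M J : ℝ) (p : Pt) : Matrix (Fin 4) (Fin 4) ℝ :=
  Matrix.of
    ![![-(1 - 2 * M * p 1 / (p 1 ^ 2 + (J / M) ^ 2 * p 2 ^ 2)), 0, 0,
        -(2 * M * (J / M) * p 1 * (1 - p 2 ^ 2) / (p 1 ^ 2 + (J / M) ^ 2 * p 2 ^ 2))],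
      ![0, (p 1 ^ 2 + (J / M) ^ 2 * p 2 ^ 2) / (p 1 ^ 2 - 2 * M * p 1 + (J / M) ^ 2), 0, 0],
      ![0, 0, (p 1 ^ 2 + (J / M) ^ 2 * p 2 ^ 2) / (1 - p 2 ^ 2), 0],
      ![-(2 * M * (J / M) * p 1 * (1 - p 2 ^ 2) / (p 1 ^ 2 + (J / M) ^ 2 * p 2 ^ 2)), 0, 0,
        (1 - p 2 ^ 2) / (p 1 ^ 2 + (J / M) ^ 2 * p 2 ^ 2) *
          (2 * (J / M) ^ 2 * M * p 1 * (1 - p 2 ^ 2)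
            + ((J / M) ^ 2 + p 1 ^ 2) * (p 1 ^ 2 + (J / M) ^ 2 * p 2 ^ 2))]]

/-- The background Kerr metric with `M = 1` and spin `a`. -/
def g (a : ℝ) : Pt → Matrix (Fin 4) (Fin 4) ℝ := gFam 1 a

/-- Inverse Kerr metric. -/
def gInv (a : ℝ) (p : Pt) : Matrix (Fin 4) (Fin 4) ℝ := (g a p)⁻¹

/-- Christoffel symbols `Γ^l_{m n}` of the Kerr metric. -/
def Chr (a : ℝ) (l m n : Fin 4) (p : Pt) : ℝ :=
  (1 / 2) * ∑ s : Fin 4, gInv a p l s *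
    (pd m (fun q => g a q s n) p + pd n (fun q => g a q s m) p - pd s (fun q => g a q m n) p)

/-- Covariant derivative `(∇_c h)_{α β}` of a covariant 2-tensor field. -/
def covD2 (a : ℝ) (h : Pt → Matrix (Fin 4) (Fin 4) ℝ) (c α β : Fin 4) (p : Pt) : ℝ :=
  pd c (fun q => h q α β) p
    - ∑ s : Fin 4, Chr a s c α p * h p s β
    - ∑ s : Fin 4, Chr a s c β p * h p α s

/-- Covariant derivative `(∇_c T)_{α β γ}` of a covariant 3-tensor field. -/
def covD3 (a : ℝ) (T : Fin 4 → Fin 4 → Fin 4 → Pt → ℝ) (c α β γ : Fin 4) (p : Pt) : ℝ :=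
  pd c (fun q => T α β γ q) p
    - ∑ s : Fin 4, Chr a s c α p * T s β γ p
    - ∑ s : Fin 4, Chr a s c β p * T α s γ p
    - ∑ s : Fin 4, Chr a s c γ p * T α β s p

/-- The Killing vector `k = x ∂_t + y ∂_φ` of the Kerr background. -/
def kvec (x y : ℝ) : Fin 4 → ℝ := ![x, 0, 0, y]

/-- The lowered Killing covector `k_α`. -/
def kco (a x y : ℝ) (p : Pt) (α : Fin 4) : ℝ := ∑ s : Fin 4, g a p α s * kvec x y s

/-- `∇_β k^λ` for the Killing vector `k = x ∂_t + y ∂_φ`. -/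
def covDk (a x y : ℝ) (β l : Fin 4) (p : Pt) : ℝ :=
  pd β (fun _ => kvec x y l) p + ∑ s : Fin 4, Chr a l β s p * kvec x y s

/-- Trace-reversed metric perturbation `h̄_{αβ} = h_{αβ} − ½ g_{αβ} g^{λσ} h_{λσ}`. -/
def trRev (a : ℝ) (h : Pt → Matrix (Fin 4) (Fin 4) ℝ) (p : Pt) : Matrix (Fin 4) (Fin 4) ℝ :=
  Matrix.of fun α β =>
    h p α β - (1 / 2) * g a p α β * ∑ l : Fin 4, ∑ s : Fin 4, gInv a p l s * h p l s

/-- Abbott–Deser 2-form `F_{αβ}[h, k]` (lowered indices) for the Killing vector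
`k = x ∂_t + y ∂_φ`. -/
def ADform (a : ℝ) (h : Pt → Matrix (Fin 4) (Fin 4) ℝ) (x y : ℝ) (α β : Fin 4) (p : Pt) : ℝ :=
  (1 / (8 * Real.pi)) *
    ((1 / 2) * (∑ l : Fin 4, kvec x y l *
        (covD2 a (trRev a h) α β l p - covD2 a (trRev a h) β α l p))
    + (1 / 2) * (∑ l : Fin 4,
        (trRev a h p l α * covDk a x y β l p - trRev a h p l β * covDk a x y α l p))
    - (1 / 2) *
        (kco a x y p α * ∑ l : Fin 4, ∑ s : Fin 4, gInv a p l s * covD2 a (trRev a h) s β l p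
        - kco a x y p β * ∑ l : Fin 4, ∑ s : Fin 4, gInv a p l s * covD2 a (trRev a h) s α l p))

/-- Abbott–Deser 2-form with raised indices, `F^{αβ}[h,k]`. -/
def ADformUp (a : ℝ) (h : Pt → Matrix (Fin 4) (Fin 4) ℝ) (x y : ℝ) (α β : Fin 4) (p : Pt) : ℝ :=
  ∑ m : Fin 4, ∑ n : Fin 4, gInv a p α m * gInv a p β n * ADform a h x y m n p

/-- The Abbott–Deser charge density `ℱ[k] := Σ F^{rt}[h,k]`. -/
def Fdens (a : ℝ) (h : Pt → Matrix (Fin 4) (Fin 4) ℝ) (x y : ℝ) (p : Pt) : ℝ :=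
  Sig a (p 1) (p 2) * ADformUp a h x y 1 0 p

/-- The Abbott–Deser charge `Q[h, x∂_t + y∂_φ, S_{t,r}] = ∫₀^{2π}∫_{−1}^1 Σ F^{rt} dz dφ`. -/
def ADcharge (a : ℝ) (h : Pt → Matrix (Fin 4) (Fin 4) ℝ) (x y t r : ℝ) : ℝ :=
  ∫ φ in (0:ℝ)..(2 * Real.pi), ∫ z in (-1:ℝ)..(1:ℝ),
    Sig a r z * ADformUp a h x y 1 0 ![t, r, z, φ]

/-! ### The Kinnersley tetrad and Newman-Penrose quantities -/

/-- The Newman–Penrose coefficient `ρ = −1/(r − i a z)`. -/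
def rhoC (a : ℝ) (p : Pt) : ℂ := -1 / ((p 1 : ℂ) - Complex.I * (a : ℂ) * (p 2 : ℂ))

/-- Kinnersley tetrad leg `l^μ`. -/
def lvec (a : ℝ) (p : Pt) : Fin 4 → ℂ := fun i =>
  ((![(p 1 ^ 2 + a ^ 2) / Del a (p 1), 1, 0, a / Del a (p 1)] : Fin 4 → ℝ) i : ℂ)

/-- Kinnersley tetrad leg `n^μ`. -/
def nvec (a : ℝ) (p : Pt) : Fin 4 → ℂ := fun i =>
  ((![(p 1 ^ 2 + a ^ 2) / (2 * Sig a (p 1) (p 2)), -Del a (p 1) / (2 * Sig a (p 1) (p 2)), 0,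
      a / (2 * Sig a (p 1) (p 2))] : Fin 4 → ℝ) i : ℂ)

/-- Kinnersley tetrad leg `m^μ`. -/
def mvec (a : ℝ) (p : Pt) : Fin 4 → ℂ := fun i =>
  (-(conj (rhoC a p)) * (Real.sqrt (1 - p 2 ^ 2) : ℂ) / (Real.sqrt 2 : ℂ)) *
    (![Complex.I * (a : ℂ), 0, -1, Complex.I / (1 - (p 2 : ℂ) ^ 2)] i)

/-- Kinnersley tetrad leg `m̄^μ`. -/
def mbvec (a : ℝ) (p : Pt) : Fin 4 → ℂ := fun i => conj (mvec a p i)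

/-- Lowered tetrad covector `l_μ`. -/
def lco (a : ℝ) (p : Pt) (i : Fin 4) : ℂ := ∑ j : Fin 4, (g a p i j : ℂ) * lvec a p j

/-- Lowered tetrad covector `n_μ`. -/
def nco (a : ℝ) (p : Pt) (i : Fin 4) : ℂ := ∑ j : Fin 4, (g a p i j : ℂ) * nvec a p j

/-- Lowered tetrad covector `m_μ`. -/
def mco (a : ℝ) (p : Pt) (i : Fin 4) : ℂ := ∑ j : Fin 4, (g a p i j : ℂ) * mvec a p j

/-- Lowered tetrad covector `m̄_μ`. -/
def mbco (a : ℝ) (p : Pt) (i : Fin 4) : ℂ := ∑ j : Fin 4, (g a p i j : ℂ) * mbvec a p j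

/-- Newman–Penrose spin coefficient `μ = ρ²ρ̄Δ/2`. -/
def muNP (a : ℝ) (p : Pt) : ℂ := rhoC a p ^ 2 * conj (rhoC a p) * (Del a (p 1) : ℂ) / 2

/-- Newman–Penrose spin coefficient `τ = −iaρρ̄√(1−z²)/√2`. -/
def tauNP (a : ℝ) (p : Pt) : ℂ :=
  -Complex.I * (a : ℂ) * rhoC a p * conj (rhoC a p) * (Real.sqrt (1 - p 2 ^ 2) : ℂ)
    / (Real.sqrt 2 : ℂ)

/-- Newman–Penrose spin coefficient `π = iaρ²√(1−z²)/√2`. -/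
def piNP (a : ℝ) (p : Pt) : ℂ :=
  Complex.I * (a : ℂ) * rhoC a p ^ 2 * (Real.sqrt (1 - p 2 ^ 2) : ℂ) / (Real.sqrt 2 : ℂ)

/-- Newman–Penrose spin coefficient `γ = μ + ρρ̄(r−1)/2`. -/
def gamNP (a : ℝ) (p : Pt) : ℂ :=
  muNP a p + rhoC a p * conj (rhoC a p) * ((p 1 : ℂ) - 1) / 2

/-- Newman–Penrose spin coefficient `β = −ρ̄z/(2√2√(1−z²))`. -/
def betNP (a : ℝ) (p : Pt) : ℂ :=
  -(conj (rhoC a p)) * (p 2 : ℂ) / (2 * (Real.sqrt 2 : ℂ) * (Real.sqrt (1 - p 2 ^ 2) : ℂ))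

/-- Newman–Penrose spin coefficient `α = π − β̄`. -/
def alpNP (a : ℝ) (p : Pt) : ℂ := piNP a p - conj (betNP a p)

/-- Directional derivative along a (complex) vector field. -/
def dirD (v : Pt → Fin 4 → ℂ) (f : Pt → ℂ) (p : Pt) : ℂ := ∑ i : Fin 4, v p i * pdC i f p

/-- First-order operator `(v^μ ∂_μ + c)` acting on complex scalars. -/
def opD (v : Pt → Fin 4 → ℂ) (c : Pt → ℂ) (f : Pt → ℂ) : Pt → ℂ :=
  fun p => dirD v f p + c p * f p

/-- The CCK operator `₊₂Ĥ_{μν}` applied to a Hertz potential `Φ`. -/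
def Hplus (a : ℝ) (Φ : Pt → ℂ) (p : Pt) (i j : Fin 4) : ℂ :=
  -(rhoC a p) ^ (-4 : ℤ) *
    (lco a p i * lco a p j *
        opD (mbvec a) (fun q => -3 * alpNP a q - conj (betNP a q) + 5 * piNP a q)
          (opD (mbvec a) (fun q => -4 * alpNP a q + piNP a q) Φ) p
    + mco a p i * mco a p j *
        opD (nvec a) (fun q => 5 * muNP a q - 3 * gamNP a q + conj (gamNP a q))
          (opD (nvec a) (fun q => muNP a q - 4 * gamNP a q) Φ) p
    - (1 / 2) * (lco a p i * mco a p j + lco a p j * mco a p i) *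
        (opD (mbvec a)
            (fun q => -3 * alpNP a q + conj (betNP a q) + 5 * piNP a q + conj (tauNP a q))
            (opD (nvec a) (fun q => muNP a q - 4 * gamNP a q) Φ) p
        + opD (nvec a)
            (fun q => 5 * muNP a q - conj (muNP a q) - 3 * gamNP a q - conj (gamNP a q))
            (opD (mbvec a) (fun q => -4 * alpNP a q + piNP a q) Φ) p))

/-- The CCK operator `₋₂Ĥ_{μν}` applied to a Hertz potential `Φ`. -/
def Hminus (a : ℝ) (Φ : Pt → ℂ) (p : Pt) (i j : Fin 4) : ℂ :=
  -(nco a p i * nco a p j *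
        opD (mvec a) (fun q => conj (alpNP a q) + 3 * betNP a q - tauNP a q)
          (opD (mvec a) (fun q => 4 * betNP a q + 3 * tauNP a q) Φ) p
    + mbco a p i * mbco a p j *
        opD (lvec a) (fun q => -(rhoC a q))
          (opD (lvec a) (fun q => 3 * rhoC a q) Φ) p
    - (1 / 2) * (nco a p i * mbco a p j + nco a p j * mbco a p i) *
        (opD (mvec a) (fun q => -2 * conj (alpNP a q) + 2 * betNP a q - tauNP a q)
            (opD (lvec a) (fun q => 3 * rhoC a q) Φ) p
        + opD (lvec a) (fun q => conj (rhoC a q) - rhoC a q)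
            (opD (mvec a) (fun q => 4 * betNP a q + 3 * tauNP a q) Φ) p))

/-- `ₛĤ_{μν} Φ` for `s = ±2`. -/
def Hop (a : ℝ) (s : ℤ) (Φ : Pt → ℂ) (p : Pt) (i j : Fin 4) : ℂ :=
  if s = 2 then Hplus a Φ p i j else Hminus a Φ p i j

/-- The CCK metric perturbation `h^{CCK}[s,Φ]_{μν} := ₛĤ_{μν}Φ + c.c.`. -/
def hCCK (a : ℝ) (s : ℤ) (Φ : Pt → ℂ) (p : Pt) : Matrix (Fin 4) (Fin 4) ℝ :=
  Matrix.of fun i j => (Hop a s Φ p i j + conj (Hop a s Φ p i j)).re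

/-- The homogeneous spin-`s` Teukolsky operator on the Kerr exterior. -/
def Teuk (a : ℝ) (s : ℤ) (Φ : Pt → ℂ) (p : Pt) : ℂ :=
  -((((p 1 : ℂ) ^ 2 + (a : ℂ) ^ 2) ^ 2 / (Del a (p 1) : ℂ)
      - (a : ℂ) ^ 2 * (1 - (p 2 : ℂ) ^ 2)) * pdC 0 (pdC 0 Φ) p)
  - (4 * (a : ℂ) * (p 1 : ℂ) / (Del a (p 1) : ℂ)) * pdC 0 (pdC 3 Φ) p
  - ((a : ℂ) ^ 2 / (Del a (p 1) : ℂ) - 1 / (1 - (p 2 : ℂ) ^ 2)) * pdC 3 (pdC 3 Φ) p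
  + 2 * (s : ℂ) * (((p 1 : ℂ) ^ 2 - (a : ℂ) ^ 2) / (Del a (p 1) : ℂ) - (p 1 : ℂ)
      - Complex.I * (a : ℂ) * (p 2 : ℂ)) * pdC 0 Φ p
  + 2 * (s : ℂ) * ((a : ℂ) * ((p 1 : ℂ) - 1) / (Del a (p 1) : ℂ)
      + Complex.I * (p 2 : ℂ) / (1 - (p 2 : ℂ) ^ 2)) * pdC 3 Φ p
  + (Del a (p 1) : ℂ) ^ (-s) *
      pdC 1 (fun q => (Del a (q 1) : ℂ) ^ (s + 1) * pdC 1 Φ q) p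
  + pdC 2 (fun q => (1 - (q 2 : ℂ) ^ 2) * pdC 2 Φ q) p
  - (((s : ℂ) * ((s : ℂ) + 1) * (p 2 : ℂ) ^ 2 - (s : ℂ)) / (1 - (p 2 : ℂ) ^ 2)) * Φ p

/-- The exterior Kerr coordinate patch `{r > r₊, −1 < z < 1}`. -/
def ext (a : ℝ) : Set Pt := {p | rplus a < p 1 ∧ -1 < p 2 ∧ p 2 < 1}

/-- The closed exterior patch `{r > r₊, −1 ≤ z ≤ 1}`. -/
def extCl (a : ℝ) : Set Pt := {p | rplus a < p 1 ∧ -1 ≤ p 2 ∧ p 2 ≤ 1}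

/-- A Fourier mode Hertz potential `Φ(t,r,z,φ) = ψ(r,z) e^{i(mφ − ωt)}`. -/
def fourierMode (m : ℤ) (ω : ℝ) (ψ : ℝ → ℝ → ℂ) : Pt → ℂ :=
  fun p => ψ (p 1) (p 2) * Complex.exp (Complex.I * ((m : ℂ) * (p 3 : ℂ) - (ω : ℂ) * (p 0 : ℂ)))

/-- The 2D domain `U = {(r,z) : r > r₊, −1 < z < 1}`. -/
def U2 (a : ℝ) : Set (ℝ × ℝ) := {q | rplus a < q.1 ∧ -1 < q.2 ∧ q.2 < 1}

/-- The closed 2D domain `{(r,z) : r > r₊, −1 ≤ z ≤ 1}`. -/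
def U2cl (a : ℝ) : Set (ℝ × ℝ) := {q | rplus a < q.1 ∧ -1 ≤ q.2 ∧ q.2 ≤ 1}

/-- `∂_r` of a function of `(r, z)`. -/
def pdr2 (f : ℝ → ℝ → ℂ) : ℝ → ℝ → ℂ := fun r z => deriv (fun r' => f r' z) r

/-- `∂_z` of a function of `(r, z)`. -/
def pdz2 (f : ℝ → ℝ → ℂ) : ℝ → ℝ → ℂ := fun r z => deriv (fun z' => f r z') z

/-- The stationary axisymmetric spin-`s` Teukolsky operator
`𝒯_s Φ := Δ^{−s}∂_r(Δ^{s+1}∂_rΦ) + ∂_z((1−z²)∂_zΦ) − ((s(s+1)z²−s)/(1−z²))Φ`. -/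
def TeukSAS (a : ℝ) (s : ℤ) (ψ : ℝ → ℝ → ℂ) (r z : ℝ) : ℂ :=
  (Del a r : ℂ) ^ (-s) *
      deriv (fun r' => (Del a r' : ℂ) ^ (s + 1) * deriv (fun r'' => ψ r'' z) r') r
    + deriv (fun z' => ((1 - z' ^ 2 : ℝ) : ℂ) * deriv (fun z'' => ψ r z'') z') z
    - (((s : ℂ) * ((s : ℂ) + 1) * (z : ℂ) ^ 2 - (s : ℂ)) / (1 - (z : ℂ) ^ 2)) * ψ r z


/-- The mass perturbation `h_M := ∂g^{Kerr}/∂M` at `M = 1`, `J = a`. -/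
def hM (a : ℝ) (p : Pt) : Matrix (Fin 4) (Fin 4) ℝ :=
  Matrix.of fun i j => deriv (fun M => gFam M a p i j) 1

/-- The angular-momentum perturbation `h_J := ∂g^{Kerr}/∂J` at `M = 1`, `J = a`. -/
def hJ (a : ℝ) (p : Pt) : Matrix (Fin 4) (Fin 4) ℝ :=
  Matrix.of fun i j => deriv (fun J => gFam 1 J p i j) a

/-- The eight-parameter family `Φ_Ker(c)` of stationary axisymmetric kernel elements
(`c 0, ..., c 7` correspond to `c₁, ..., c₈`). -/
def PhiKer (a : ℝ) (c : Fin 8 → ℂ) (r z : ℝ) : ℂ :=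
  (1 - (z : ℂ) ^ 2)⁻¹ *
    (c 0
    + c 1 * ((r : ℂ) - 1) * (z : ℂ)
    + c 2 * (z : ℂ) * ((z : ℂ) ^ 2 - 3)
    + c 3 * ((r : ℂ) + ((r : ℂ) - 1) * (z : ℂ) ^ 2)
    + c 4 * ((r : ℂ) ^ 2 - (a : ℂ) ^ 2) * (z : ℂ)
    + c 5 * (r : ℂ) * ((r : ℂ) * ((r : ℂ) - 3) + 3 * (a : ℂ) ^ 2)
    + c 6 * ((r : ℂ) ^ 2 + ((r : ℂ) ^ 2 - (a : ℂ) ^ 2) * (z : ℂ) ^ 2)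
    + c 7 * (r : ℂ) * (z : ℂ) *
        (((r : ℂ) * ((r : ℂ) - 3) + 3 * (a : ℂ) ^ 2) * (z : ℂ) ^ 2
          - 3 * ((r : ℂ) * ((r : ℂ) + 4) - 4 * (a : ℂ) ^ 2)))

/-- `G(z) = −4(1−a²)r₊z(1−z²)/(2z² + r₊(1−z²))²`. -/
def Gfun (a z : ℝ) : ℝ :=
  -4 * (1 - a ^ 2) * rplus a * z * (1 - z ^ 2) / (2 * z ^ 2 + rplus a * (1 - z ^ 2)) ^ 2

/-- Outward Abbott–Deser flux through the closed surface `C_ε⁺` around the segment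
`r₁ ≤ r ≤ r₂` of the axis `z = 1`, in the slice `t = t₀`: two caps at `r = r₁, r₂`
and the tube at `z = 1 − ε`. -/
def axisFluxP (a : ℝ) (h : Pt → Matrix (Fin 4) (Fin 4) ℝ) (x y t r₁ r₂ ε : ℝ) : ℝ :=
  (∫ φ in (0:ℝ)..(2 * Real.pi), ∫ z in (1 - ε)..(1:ℝ),
      Sig a r₂ z * ADformUp a h x y 1 0 ![t, r₂, z, φ])
  - (∫ φ in (0:ℝ)..(2 * Real.pi), ∫ z in (1 - ε)..(1:ℝ),
      Sig a r₁ z * ADformUp a h x y 1 0 ![t, r₁, z, φ])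
  - (∫ φ in (0:ℝ)..(2 * Real.pi), ∫ r in r₁..r₂,
      Sig a r (1 - ε) * ADformUp a h x y 2 0 ![t, r, 1 - ε, φ])

/-- Outward Abbott–Deser flux through the closed surface `C_ε⁻` around the segment
`r₁ ≤ r ≤ r₂` of the axis `z = −1`. -/
def axisFluxM (a : ℝ) (h : Pt → Matrix (Fin 4) (Fin 4) ℝ) (x y t r₁ r₂ ε : ℝ) : ℝ :=
  (∫ φ in (0:ℝ)..(2 * Real.pi), ∫ z in (-1:ℝ)..(-1 + ε),
      Sig a r₂ z * ADformUp a h x y 1 0 ![t, r₂, z, φ])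
  - (∫ φ in (0:ℝ)..(2 * Real.pi), ∫ z in (-1:ℝ)..(-1 + ε),
      Sig a r₁ z * ADformUp a h x y 1 0 ![t, r₁, z, φ])
  + (∫ φ in (0:ℝ)..(2 * Real.pi), ∫ r in r₁..r₂,
      Sig a r (-1 + ε) * ADformUp a h x y 2 0 ![t, r, -1 + ε, φ])

/-- The statement that both limiting Abbott–Deser axis charges
`Q_axis^± [h, x∂_t + y∂_φ, r₁, r₂]` vanish. -/
def axisChargesVanish (a : ℝ) (h : Pt → Matrix (Fin 4) (Fin 4) ℝ) : Prop :=
  ∀ x y t r₁ r₂ : ℝ, rplus a < r₁ → r₁ < r₂ →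
    Tendsto (fun ε => axisFluxP a h x y t r₁ r₂ ε) (nhdsWithin 0 (Set.Ioi 0)) (nhds 0) ∧
    Tendsto (fun ε => axisFluxM a h x y t r₁ r₂ ε) (nhdsWithin 0 (Set.Ioi 0)) (nhds 0)

/-- Covariant Hessian `∇_α ∇_β f` of a scalar field. -/
def hess (a : ℝ) (f : Pt → ℝ) (α β : Fin 4) (p : Pt) : ℝ :=
  pd α (fun q => pd β f q) p - ∑ s : Fin 4, Chr a s α β p * pd s f p

/-- The linearized Ricci tensor
`δR_{αβ}[h] = −½∇^λ∇_λ h_{αβ} − ½∇_α∇_β(g^{λσ}h_{λσ}) + ∇^λ∇_{(α}h_{β)λ}`. -/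
def linRicci (a : ℝ) (h : Pt → Matrix (Fin 4) (Fin 4) ℝ) (α β : Fin 4) (p : Pt) : ℝ :=
  -(1 / 2) * (∑ l : Fin 4, ∑ s : Fin 4, gInv a p l s * covD3 a (covD2 a h) l s α β p)
  - (1 / 2) * hess a (fun q => ∑ l : Fin 4, ∑ s : Fin 4, gInv a q l s * h q l s) α β p
  + (1 / 2) * ((∑ l : Fin 4, ∑ s : Fin 4, gInv a p l s * covD3 a (covD2 a h) s α β l p)
      + (∑ l : Fin 4, ∑ s : Fin 4, gInv a p l s * covD3 a (covD2 a h) s β α l p))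


/-- **Verification of the stationary axisymmetric kernel solutions.**  For every
`c ∈ ℂ⁸` the function `Φ_Ker(c)` satisfies `∂_r⁴ Φ_Ker(c) = 0` and `𝒯₋₂ Φ_Ker(c) = 0`
at every point of `U = {(r,z) : r > r₊, −1 < z < 1}`. -/
private lemma hasDerivAt_ofReal' (t : ℝ) : HasDerivAt (fun s : ℝ => (s:ℂ)) 1 t := by
  simpa using (hasDerivAt_id t).ofReal_comp

private lemma hasDerivAt_sqC {f : ℝ → ℂ} {f' : ℂ} {x : ℝ} (hf : HasDerivAt f f' x) :
    HasDerivAt (fun t => (f t)^2) (2 * f x * f') x := by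
  have h := hf.mul hf
  have he : (f * f) = fun t => (f t)^2 := funext fun t => (sq (f t)).symm
  rw [he] at h
  refine h.congr_deriv ?_
  ring

private lemma hasDerivAt_cubeC {f : ℝ → ℂ} {f' : ℂ} {x : ℝ} (hf : HasDerivAt f f' x) :
    HasDerivAt (fun t => (f t)^3) (3 * (f x)^2 * f') x := by
  have h := hf.mul (hasDerivAt_sqC hf)
  have he : (f * fun t => (f t)^2) = fun t => (f t)^3 := funext fun t => by
    show f t * f t ^ 2 = f t ^ 3; ring
  rw [he] at h
  refine h.congr_deriv ?_
  ring

private lemma hasDerivAt_invC {f : ℝ → ℂ} {f' : ℂ} {x : ℝ} (hf : HasDerivAt f f' x)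
    (hx : f x ≠ 0) : HasDerivAt (fun t => (f t)⁻¹) (-f' / f x ^ 2) x := by
  have h := (hasDerivAt_const x (1:ℂ)).div hf hx
  have he : ((fun _ => (1:ℂ)) / f) = fun y => (f y)⁻¹ := funext fun y => one_div _
  rw [he] at h
  refine h.congr_deriv ?_
  ring

private lemma hasDerivAt_cubicC (A B C D : ℂ) (t : ℝ) :
    HasDerivAt (fun s : ℝ => A + B*(s:ℂ) + C*(s:ℂ)^2 + D*(s:ℂ)^3)
      (B + 2*C*(t:ℂ) + 3*D*(t:ℂ)^2) t := by
  have h := hasDerivAt_ofReal' t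
  have h2 := (((hasDerivAt_const t A).add (h.const_mul B)).add
      ((hasDerivAt_sqC h).const_mul C)).add ((hasDerivAt_cubeC h).const_mul D)
  refine h2.congr_deriv ?_
  ring

private lemma deriv_cubicC (A B C D : ℂ) :
    deriv (fun s : ℝ => A + B*(s:ℂ) + C*(s:ℂ)^2 + D*(s:ℂ)^3)
      = fun t : ℝ => B + 2*C*(t:ℂ) + 3*D*(t:ℂ)^2 :=
  funext fun t => (hasDerivAt_cubicC A B C D t).deriv

private lemma hasDerivAt_quadC (B C D : ℂ) (t : ℝ) :
    HasDerivAt (fun s : ℝ => B + 2*C*(s:ℂ) + 3*D*(s:ℂ)^2) (2*C + 6*D*(t:ℂ)) t := by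
  have h := hasDerivAt_ofReal' t
  have h2 := ((hasDerivAt_const t B).add (h.const_mul (2*C))).add
      ((hasDerivAt_sqC h).const_mul (3*D))
  refine h2.congr_deriv ?_
  ring

private lemma deriv4_cubicC (A B C D : ℂ) (x : ℝ) :
    deriv^[4] (fun s : ℝ => A + B*(s:ℂ) + C*(s:ℂ)^2 + D*(s:ℂ)^3) x = 0 := by
  show deriv (deriv (deriv (deriv (fun s : ℝ => A + B*(s:ℂ) + C*(s:ℂ)^2 + D*(s:ℂ)^3)))) x = 0
  rw [deriv_cubicC]
  rw [show (fun t : ℝ => B + 2*C*(t:ℂ) + 3*D*(t:ℂ)^2)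
      = fun s : ℝ => B + (2*C)*(s:ℂ) + (3*D)*(s:ℂ)^2 + 0*(s:ℂ)^3 from by funext t; ring]
  rw [deriv_cubicC]
  rw [show (fun t : ℝ => 2*C + 2*(3*D)*(t:ℂ) + 3*0*(t:ℂ)^2)
      = fun s : ℝ => (2*C) + (6*D)*(s:ℂ) + 0*(s:ℂ)^2 + 0*(s:ℂ)^3 from by funext t; ring]
  rw [deriv_cubicC]
  rw [show (fun t : ℝ => 6*D + 2*0*(t:ℂ) + 3*0*(t:ℂ)^2)
      = fun s : ℝ => (6*D) + 0*(s:ℂ) + 0*(s:ℂ)^2 + 0*(s:ℂ)^3 from by funext t; ring]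
  rw [deriv_cubicC]
  simp

set_option maxHeartbeats 4000000 in
theorem PhiKer_solves (a : ℝ) (ha : |a| < 1) (c : Fin 8 → ℂ) :
    ∀ q ∈ U2 a,
      deriv^[4] (fun r' => PhiKer a c r' q.2) q.1 = 0 ∧
      TeukSAS a (-2) (PhiKer a c) q.1 q.2 = 0 := by
  intro q hq
  obtain ⟨hr, hz1, hz2⟩ := hq
  set r := q.1 with hrdef
  set z := q.2 with hzdef
  have haa : (0:ℝ) ≤ 1 - a^2 := by nlinarith [sq_abs a, abs_nonneg a]
  have hs : (0:ℝ) ≤ Real.sqrt (1-a^2) := Real.sqrt_nonneg _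
  have hs2 : Real.sqrt (1-a^2)^2 = 1-a^2 := Real.sq_sqrt haa
  have hrp : 1 + Real.sqrt (1-a^2) < r := hr
  have hD : (0:ℝ) < Del a r := by simp only [Del]; nlinarith
  have hDc : ((Del a r : ℝ) : ℂ) ≠ 0 := Complex.ofReal_ne_zero.mpr (ne_of_gt hD)
  have hw' : (0:ℝ) < 1 - z^2 := by nlinarith
  have hw : ((1:ℂ) - (z:ℂ)^2) ≠ 0 := by
    have h := Complex.ofReal_ne_zero.mpr (ne_of_gt hw')
    push_cast at h
    exact h
  set K0 : ℂ := ((1:ℂ)-(z:ℂ)^2)⁻¹ *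
    (c 0 - c 1*(z:ℂ) + c 2*(z:ℂ)*((z:ℂ)^2-3) - c 3*(z:ℂ)^2
      - c 4*(a:ℂ)^2*(z:ℂ) - c 6*(a:ℂ)^2*(z:ℂ)^2) with hK0
  set K1 : ℂ := ((1:ℂ)-(z:ℂ)^2)⁻¹ *
    (c 1*(z:ℂ) + c 3*(1+(z:ℂ)^2) + 3*(a:ℂ)^2*c 5
      + c 7*(3*(a:ℂ)^2*(z:ℂ)^3 + 12*(a:ℂ)^2*(z:ℂ))) with hK1
  set K2 : ℂ := ((1:ℂ)-(z:ℂ)^2)⁻¹ *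
    (c 4*(z:ℂ) - 3*c 5 + c 6*(1+(z:ℂ)^2) + c 7*(-3*(z:ℂ)^3 - 12*(z:ℂ))) with hK2
  set K3 : ℂ := ((1:ℂ)-(z:ℂ)^2)⁻¹ * (c 5 + c 7*((z:ℂ)^3 - 3*(z:ℂ))) with hK3
  clear_value K0 K1 K2 K3
  have hcubefun : (fun r' : ℝ => PhiKer a c r' z)
      = fun r' : ℝ => K0 + K1*(r':ℂ) + K2*(r':ℂ)^2 + K3*(r':ℂ)^3 := by
    funext r'
    simp only [PhiKer, hK0, hK1, hK2, hK3]
    ring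
  constructor
  · rw [hcubefun]
    exact deriv4_cubicC K0 K1 K2 K3 r
  · -- angular coefficients
    set M0 : ℂ := c 0 + c 3*(r:ℂ)
        + c 5*((r:ℂ)^3 - 3*(r:ℂ)^2 + 3*(a:ℂ)^2*(r:ℂ)) + c 6*(r:ℂ)^2 with hM0
    set M1 : ℂ := c 1*((r:ℂ)-1) - 3*c 2 + c 4*((r:ℂ)^2-(a:ℂ)^2)
        - 3*c 7*((r:ℂ)^3 + 4*(r:ℂ)^2 - 4*(a:ℂ)^2*(r:ℂ)) with hM1
    set M2 : ℂ := c 3*((r:ℂ)-1) + c 6*((r:ℂ)^2-(a:ℂ)^2) with hM2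
    set M3 : ℂ := c 2 + c 7*((r:ℂ)^3 - 3*(r:ℂ)^2 + 3*(a:ℂ)^2*(r:ℂ)) with hM3
    clear_value M0 M1 M2 M3
    have hderivr : (deriv fun r'' : ℝ => PhiKer a c r'' z)
        = fun r' : ℝ => K1 + 2*K2*(r':ℂ) + 3*K3*(r':ℂ)^2 := by
      rw [hcubefun, deriv_cubicC]
    have hDelEq : (fun r' : ℝ => ((Del a r' : ℝ):ℂ))
        = fun r' : ℝ => (r':ℂ)*((r':ℂ)-2) + (a:ℂ)^2 := by
      funext r'; simp only [Del]; push_cast; ring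
    have hDelAt : HasDerivAt (fun r' : ℝ => ((Del a r' : ℝ):ℂ)) (2*(r:ℂ)-2) r := by
      rw [hDelEq]
      have h := hasDerivAt_ofReal' r
      have h2 := (h.mul (h.sub_const 2)).add_const ((a:ℂ)^2)
      refine h2.congr_deriv ?_
      ring
    have hradAt : HasDerivAt
        (fun r' : ℝ => ((Del a r' : ℝ):ℂ)⁻¹ * (K1 + 2*K2*(r':ℂ) + 3*K3*(r':ℂ)^2)) _ r :=
      (hasDerivAt_invC hDelAt hDc).mul (hasDerivAt_quadC K1 K2 K3 r)
    have hzfun : (fun z' : ℝ => PhiKer a c r z')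
        = fun z' : ℝ => ((1:ℂ)-(z':ℂ)^2)⁻¹ * (M0 + M1*(z':ℂ) + M2*(z':ℂ)^2 + M3*(z':ℂ)^3) := by
      funext z'
      simp only [PhiKer, hM0, hM1, hM2, hM3]
      ring
    have hdAt : ∀ t : ℝ, HasDerivAt (fun s : ℝ => (1:ℂ)-(s:ℂ)^2) (-(2*(t:ℂ))) t := by
      intro t
      have h := (hasDerivAt_const t (1:ℂ)).sub (hasDerivAt_sqC (hasDerivAt_ofReal' t))
      refine h.congr_deriv ?_
      push_cast
      ring
    have hpsiAt : ∀ t : ℝ, ((1:ℂ)-(t:ℂ)^2) ≠ 0 → HasDerivAt (fun s : ℝ => PhiKer a c r s)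
        (-(-(2*(t:ℂ))) / ((1:ℂ)-(t:ℂ)^2)^2 * (M0 + M1*(t:ℂ) + M2*(t:ℂ)^2 + M3*(t:ℂ)^3)
          + ((1:ℂ)-(t:ℂ)^2)⁻¹ * (M1 + 2*M2*(t:ℂ) + 3*M3*(t:ℂ)^2)) t := by
      intro t ht
      rw [hzfun]
      exact (hasDerivAt_invC (hdAt t) ht).mul (hasDerivAt_cubicC M0 M1 M2 M3 t)
    have hFAt : HasDerivAt (fun t : ℝ =>
        -(-(2*(t:ℂ))) / ((1:ℂ)-(t:ℂ)^2)^2 * (M0 + M1*(t:ℂ) + M2*(t:ℂ)^2 + M3*(t:ℂ)^3)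
          + ((1:ℂ)-(t:ℂ)^2)⁻¹ * (M1 + 2*M2*(t:ℂ) + 3*M3*(t:ℂ)^2)) (2*(1+3*(z:ℂ)^2) / ((1:ℂ)-(z:ℂ)^2)^3 * (M0 + M1*(z:ℂ) + M2*(z:ℂ)^2 + M3*(z:ℂ)^3)
          + 4*(z:ℂ) / ((1:ℂ)-(z:ℂ)^2)^2 * (M1 + 2*M2*(z:ℂ) + 3*M3*(z:ℂ)^2)
          + ((1:ℂ)-(z:ℂ)^2)⁻¹ * (2*M2 + 6*M3*(z:ℂ))) z := by
      have hnum := (((hasDerivAt_ofReal' z).const_mul (2:ℂ)).neg).neg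
      have h1 := (hnum.div (hasDerivAt_sqC (hdAt z)) (pow_ne_zero 2 hw)).mul
        (hasDerivAt_cubicC M0 M1 M2 M3 z)
      have h2 := (hasDerivAt_invC (hdAt z) hw).mul (hasDerivAt_quadC M1 M2 M3 z)
      refine (h1.add h2).congr_deriv ?_
      simp only [Pi.neg_apply, Pi.div_apply]
      field_simp
      ring
    have hcastAt : HasDerivAt (fun t : ℝ => ((1 - t^2 : ℝ):ℂ)) (-(2*(z:ℂ))) z := by
      have heq : (fun t : ℝ => ((1 - t^2 : ℝ):ℂ)) = fun t : ℝ => (1:ℂ)-(t:ℂ)^2 := by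
        funext t; push_cast; ring
      rw [heq]
      exact hdAt z
    have hGAt : HasDerivAt (fun t : ℝ => ((1 - t^2 : ℝ):ℂ) *
        (-(-(2*(t:ℂ))) / ((1:ℂ)-(t:ℂ)^2)^2 * (M0 + M1*(t:ℂ) + M2*(t:ℂ)^2 + M3*(t:ℂ)^3)
          + ((1:ℂ)-(t:ℂ)^2)⁻¹ * (M1 + 2*M2*(t:ℂ) + 3*M3*(t:ℂ)^2)))
        (-(2*(z:ℂ)) * (-(-(2*(z:ℂ))) / ((1:ℂ)-(z:ℂ)^2)^2 * (M0 + M1*(z:ℂ) + M2*(z:ℂ)^2 + M3*(z:ℂ)^3)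
          + ((1:ℂ)-(z:ℂ)^2)⁻¹ * (M1 + 2*M2*(z:ℂ) + 3*M3*(z:ℂ)^2))
          + ((1 - z^2 : ℝ):ℂ) * (2*(1+3*(z:ℂ)^2) / ((1:ℂ)-(z:ℂ)^2)^3 * (M0 + M1*(z:ℂ) + M2*(z:ℂ)^2 + M3*(z:ℂ)^3)
          + 4*(z:ℂ) / ((1:ℂ)-(z:ℂ)^2)^2 * (M1 + 2*M2*(z:ℂ) + 3*M3*(z:ℂ)^2)
          + ((1:ℂ)-(z:ℂ)^2)⁻¹ * (2*M2 + 6*M3*(z:ℂ)))) z :=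
      hcastAt.mul hFAt
    have hopen : IsOpen ((fun t : ℝ => 1 - t^2) ⁻¹' {0}ᶜ) :=
      IsOpen.preimage (continuous_const.sub (continuous_pow 2)) isOpen_compl_singleton
    have hev : (fun z' : ℝ => ((1 - z'^2 : ℝ):ℂ) * deriv (fun z'' : ℝ => PhiKer a c r z'') z')
        =ᶠ[nhds z] (fun z' : ℝ => ((1 - z'^2 : ℝ):ℂ) *
          (-(-(2*(z':ℂ))) / ((1:ℂ)-(z':ℂ)^2)^2 * (M0 + M1*(z':ℂ) + M2*(z':ℂ)^2 + M3*(z':ℂ)^3)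
            + ((1:ℂ)-(z':ℂ)^2)⁻¹ * (M1 + 2*M2*(z':ℂ) + 3*M3*(z':ℂ)^2))) := by
      filter_upwards [hopen.mem_nhds (by
        simp only [Set.mem_preimage, Set.mem_compl_iff, Set.mem_singleton_iff]
        exact ne_of_gt hw')] with t ht
      simp only [Set.mem_preimage, Set.mem_compl_iff, Set.mem_singleton_iff] at ht
      have htc : ((1:ℂ)-(t:ℂ)^2) ≠ 0 := by
        have h := Complex.ofReal_ne_zero.mpr ht
        push_cast at h
        exact h
      rw [(hpsiAt t htc).deriv]
    have hdelcast : ((Del a r : ℝ):ℂ) = (r:ℂ)*((r:ℂ)-2)+(a:ℂ)^2 := by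
      simp only [Del]; push_cast; ring
    have hdelpoly : ((r:ℂ)*((r:ℂ)-2)+(a:ℂ)^2) ≠ 0 := by
      rw [← hdelcast]; exact hDc
    have hwcast : ((1 - z^2 : ℝ):ℂ) = (1:ℂ)-(z:ℂ)^2 := by push_cast; ring
    have hpoint : PhiKer a c r z
        = ((1:ℂ)-(z:ℂ)^2)⁻¹ * (M0 + M1*(z:ℂ) + M2*(z:ℂ)^2 + M3*(z:ℂ)^3) := by
      simp only [PhiKer, hM0, hM1, hM2, hM3]; ring
    have hfinalW : -(2*(r:ℂ)-2)*(K1 + 2*K2*(r:ℂ) + 3*K3*(r:ℂ)^2)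
        + ((r:ℂ)*((r:ℂ)-2)+(a:ℂ)^2)*(2*K2 + 6*K3*(r:ℂ))
        + 2*(z:ℂ)*((1:ℂ)-(z:ℂ)^2)⁻¹*(M1 + 2*M2*(z:ℂ) + 3*M3*(z:ℂ)^2)
        + (2*M2 + 6*M3*(z:ℂ)) = 0 := by
      simp only [hK1, hK2, hK3, hM1, hM2, hM3]
      field_simp [hw]
      ring
    have e1 : ((r:ℂ)*((r:ℂ)-2)+(a:ℂ)^2)^(2:ℤ) *
        (-(2*(r:ℂ)-2)/((r:ℂ)*((r:ℂ)-2)+(a:ℂ)^2)^2 * (K1 + 2*K2*(r:ℂ) + 3*K3*(r:ℂ)^2)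
          + ((r:ℂ)*((r:ℂ)-2)+(a:ℂ)^2)⁻¹ * (2*K2 + 6*K3*(r:ℂ)))
        = -(2*(r:ℂ)-2)*(K1 + 2*K2*(r:ℂ) + 3*K3*(r:ℂ)^2)
          + ((r:ℂ)*((r:ℂ)-2)+(a:ℂ)^2)*(2*K2 + 6*K3*(r:ℂ)) := by
      rw [show ((2:ℤ)) = ((2:ℕ):ℤ) from rfl, zpow_natCast]
      field_simp [hdelpoly]
    have e2 : (-(2*(z:ℂ)) * (-(-(2*(z:ℂ))) / ((1:ℂ)-(z:ℂ)^2)^2 * (M0 + M1*(z:ℂ) + M2*(z:ℂ)^2 + M3*(z:ℂ)^3)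
          + ((1:ℂ)-(z:ℂ)^2)⁻¹ * (M1 + 2*M2*(z:ℂ) + 3*M3*(z:ℂ)^2))
          + ((1:ℂ)-(z:ℂ)^2) * (2*(1+3*(z:ℂ)^2) / ((1:ℂ)-(z:ℂ)^2)^3 * (M0 + M1*(z:ℂ) + M2*(z:ℂ)^2 + M3*(z:ℂ)^3)
          + 4*(z:ℂ) / ((1:ℂ)-(z:ℂ)^2)^2 * (M1 + 2*M2*(z:ℂ) + 3*M3*(z:ℂ)^2)
          + ((1:ℂ)-(z:ℂ)^2)⁻¹ * (2*M2 + 6*M3*(z:ℂ))))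
        = (2+2*(z:ℂ)^2) * (((1:ℂ)-(z:ℂ)^2)⁻¹)^2 * (M0 + M1*(z:ℂ) + M2*(z:ℂ)^2 + M3*(z:ℂ)^3)
          + 2*(z:ℂ)*((1:ℂ)-(z:ℂ)^2)⁻¹*(M1 + 2*M2*(z:ℂ) + 3*M3*(z:ℂ)^2)
          + (2*M2 + 6*M3*(z:ℂ)) := by
      field_simp [hw]
      ring
    have e3 : ((-2:ℂ) * ((-2:ℂ)+1) * (z:ℂ)^2 - (-2:ℂ)) / (1-(z:ℂ)^2) *
          (((1:ℂ)-(z:ℂ)^2)⁻¹ * (M0 + M1*(z:ℂ) + M2*(z:ℂ)^2 + M3*(z:ℂ)^3))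
        = (2+2*(z:ℂ)^2) * (((1:ℂ)-(z:ℂ)^2)⁻¹)^2 * (M0 + M1*(z:ℂ) + M2*(z:ℂ)^2 + M3*(z:ℂ)^3) := by
      field_simp [hw]
      ring
    simp only [TeukSAS, show (-2:ℤ)+1 = -1 by decide, show -(-2:ℤ) = 2 by decide,
      zpow_neg_one, hderivr]
    rw [hev.deriv_eq, hGAt.deriv, hradAt.deriv, hpoint, hdelcast, hwcast]
    push_cast
    linear_combination e1 + e2 - e3 + hfinalW

end Kerr
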